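/- arXiv:2503.20223 — 2 statements merged into one kernel-verified Lean document; each statement's English description precedes it below -/
import Mathlib

section
/- For any vector h ∈ ℂ^N with N ≥ 3, there exist real phases φ_1, ..., φ_N such that ∑_{i=1}^N h_i e^{iφ_i} = 0 if and only if max_{1≤i≤N} |h_i| ≤ (1/2) ∑_{i=1}^N |h_i|. -/
open Complex Finset

lemma exp_arg_of_abs_one {w : ℂ} (hw : ‖w‖ = 1) :
    Complex.exp (w.arg * Complex.I) = w := by
  have := Complex.norm_mul_exp_arg_mul_I w
  rw [hw] at this
  simpa using this

lemma triangle_exists (x y z : ℝ) (hx : 0 ≤ x) (hy : 0 ≤ y) (hz : 0 ≤ z)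
    (h1 : x ≤ y + z) (h2 : y ≤ x + z) (h3 : z ≤ x + y) :
    ∃ u v w : ℂ, ‖u‖ = 1 ∧ ‖v‖ = 1 ∧ ‖w‖ = 1 ∧
      (x : ℂ) * u + (y : ℂ) * v + (z : ℂ) * w = 0 := by
  set f : ℝ → ℝ := fun θ => ‖(y : ℂ) + (z : ℂ) * Complex.exp (θ * Complex.I)‖ with hf
  have hcont : Continuous f := by
    apply continuous_norm.comp
    continuity
  have hf0 : f 0 = y + z := by
    simp only [hf]
    rw [show ((y:ℂ) + z * Complex.exp ((0:ℝ) * Complex.I)) = ((y + z : ℝ) : ℂ) by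
      push_cast; simp]
    rw [Complex.norm_real, Real.norm_eq_abs]
    exact abs_of_nonneg (by linarith)
  have hfpi : f Real.pi = |y - z| := by
    simp only [hf]
    rw [show ((Real.pi : ℂ) * Complex.I) = (Real.pi : ℂ) * Complex.I by rfl]
    rw [Complex.exp_pi_mul_I]
    rw [show ((y:ℂ) + z * (-1)) = ((y - z : ℝ) : ℂ) by push_cast; ring]
    rw [Complex.norm_real, Real.norm_eq_abs]
  have hmem : x ∈ Set.Icc (f Real.pi) (f 0) := by
    constructor
    · rw [hfpi, abs_le]; constructor <;> linarith
    · rw [hf0]; linarith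
  obtain ⟨θ, -, hθ⟩ := intermediate_value_Icc' (le_of_lt Real.pi_pos) hcont.continuousOn hmem
  set s : ℂ := (y : ℂ) + (z : ℂ) * Complex.exp (θ * Complex.I) with hs
  have habs : ‖s‖ = x := hθ
  by_cases hs0 : s = 0
  · refine ⟨1, 1, Complex.exp (θ * Complex.I), by simp, by simp, by simp [Complex.norm_exp], ?_⟩
    have hx0 : x = 0 := by rw [← habs, hs0]; simp
    rw [hx0]
    simpa using hs0
  · have hxpos : (0:ℝ) < x := by
      rcases lt_or_eq_of_le hx with h | h
      · exact h
      · exact absurd (by rw [← habs] at h; exact (norm_eq_zero.mp h.symm)) hs0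
    have habsratio : ‖-x / s‖ = 1 := by
      rw [norm_div, habs, norm_neg, Complex.norm_real, Real.norm_eq_abs, _root_.abs_of_nonneg hx,
        div_self (ne_of_gt hxpos)]
    refine ⟨1, -x / s, -x / s * Complex.exp (θ * Complex.I), by simp, habsratio, ?_, ?_⟩
    · rw [norm_mul, habsratio, Complex.norm_exp]
      simp
    · have : (x:ℂ) * 1 + (-x / s) * s = 0 := by
        field_simp
        ring
      calc (x:ℂ) * 1 + y * (-x/s) + z * (-x/s * Complex.exp (θ * Complex.I))
          = (x:ℂ) * 1 + (-x / s) * ((y:ℂ) + z * Complex.exp (θ * Complex.I)) := by ring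
        _ = 0 := by rw [← hs, this]

lemma polygon_exists {ι : Type*} [DecidableEq ι] :
    ∀ (n : ℕ), 3 ≤ n → ∀ (s : Finset ι) (a : ι → ℝ), s.card = n →
    (∀ i ∈ s, 0 ≤ a i) → (∀ i ∈ s, 2 * a i ≤ ∑ j ∈ s, a j) →
    ∃ u : ι → ℂ, (∀ i ∈ s, ‖u i‖ = 1) ∧ ∑ i ∈ s, (a i : ℂ) * u i = 0 := by
  intro n hn
  induction n, hn using Nat.le_induction with
  | base =>
    intro s a hcard hpos hmax
    obtain ⟨x, y, z, hxy, hxz, hyz, rfl⟩ := Finset.card_eq_three.mp hcard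
    have hsum : ∑ j ∈ ({x, y, z} : Finset ι), a j = a x + a y + a z := by
      rw [Finset.sum_insert (by simp [hxy, hxz]), Finset.sum_insert (by simp [hyz]),
        Finset.sum_singleton]
      ring
    have hax := hpos x (by simp); have hay := hpos y (by simp); have haz := hpos z (by simp)
    have h1 := hmax x (by simp); have h2 := hmax y (by simp); have h3 := hmax z (by simp)
    rw [hsum] at h1 h2 h3
    obtain ⟨u, v, w, hu, hv, hw, hsum0⟩ := triangle_exists (a x) (a y) (a z)
      hax hay haz (by linarith) (by linarith) (by linarith)
    refine ⟨fun i => if i = x then u else if i = y then v else w, ?_, ?_⟩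
    · intro i hi
      simp only [Finset.mem_insert, Finset.mem_singleton] at hi
      rcases hi with rfl | rfl | rfl
      · simp [hu]
      · simp [hxy.symm, hv]
      · simp [hxz.symm, hyz.symm, hw]
    · rw [Finset.sum_insert (by simp [hxy, hxz]), Finset.sum_insert (by simp [hyz]),
        Finset.sum_singleton]
      simpa [Ne.symm hxy, Ne.symm hxz, Ne.symm hyz, add_assoc] using hsum0
  | succ n hn IH =>
    intro s a hcard hpos hmax
    -- pick i = argmin on s, j = argmin on s.erase i
    have hsne : s.Nonempty := Finset.card_pos.mp (by omega)
    obtain ⟨i, hi, hmin_i⟩ := Finset.exists_min_image s a hsne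
    have htne : (s.erase i).Nonempty := Finset.card_pos.mp (by rw [Finset.card_erase_of_mem hi]; omega)
    obtain ⟨j, hj, hmin_j⟩ := Finset.exists_min_image (s.erase i) a htne
    have hji : j ≠ i := Finset.ne_of_mem_erase hj
    have hjs : j ∈ s := Finset.mem_of_mem_erase hj
    set s' : Finset ι := s.erase j with hs'
    have hi' : i ∈ s' := Finset.mem_erase.mpr ⟨Ne.symm hji, hi⟩
    set a' : ι → ℝ := Function.update a i (a i + a j) with ha'
    have hcard' : s'.card = n := by rw [hs', Finset.card_erase_of_mem hjs, hcard]; omega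
    have e1 : a j + ∑ k ∈ s.erase j, a k = ∑ k ∈ s, a k := Finset.add_sum_erase _ _ hjs
    have e2 : a i + ∑ k ∈ s'.erase i, a k = ∑ k ∈ s', a k := Finset.add_sum_erase _ _ hi'
    have hupd_i : a' i = a i + a j := Function.update_self _ _ _
    have hupd_ne : ∀ k, k ≠ i → a' k = a k := fun k hk => Function.update_of_ne hk _ _
    have hsum_erase : ∑ k ∈ s'.erase i, a' k = ∑ k ∈ s'.erase i, a k :=
      Finset.sum_congr rfl fun k hk => hupd_ne k (Finset.ne_of_mem_erase hk)
    have e3 : a' i + ∑ k ∈ s'.erase i, a' k = ∑ k ∈ s', a' k := Finset.add_sum_erase _ _ hi'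
    have hsum_eq : ∑ k ∈ s', a' k = ∑ k ∈ s, a k := by
      rw [← e3, hsum_erase, hupd_i]
      linarith
    have hpos' : ∀ k ∈ s', 0 ≤ a' k := by
      intro k hk
      by_cases hki : k = i
      · subst hki; rw [hupd_i]
        have := hpos k hi
        have := hpos j hjs
        linarith
      · rw [hupd_ne k hki]; exact hpos k (Finset.mem_of_mem_erase hk)
    -- the key bound for the merged element
    have t2ne : ((s.erase j).erase i).Nonempty := by
      apply Finset.card_pos.mp
      rw [Finset.card_erase_of_mem (Finset.mem_erase.mpr ⟨Ne.symm hji, hi⟩),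
        Finset.card_erase_of_mem hjs, hcard]
      omega
    obtain ⟨k0, hk0⟩ := t2ne
    have hk0i : k0 ≠ i := Finset.ne_of_mem_erase hk0
    have hk0j : k0 ≠ j := Finset.ne_of_mem_erase (Finset.mem_of_mem_erase hk0)
    have hk0s : k0 ∈ s := Finset.mem_of_mem_erase (Finset.mem_of_mem_erase hk0)
    have t3ne : (((s.erase j).erase i).erase k0).Nonempty := by
      apply Finset.card_pos.mp
      rw [Finset.card_erase_of_mem hk0,
        Finset.card_erase_of_mem (Finset.mem_erase.mpr ⟨Ne.symm hji, hi⟩),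
        Finset.card_erase_of_mem hjs, hcard]
      omega
    obtain ⟨l0, hl0⟩ := t3ne
    have hl0k : l0 ≠ k0 := Finset.ne_of_mem_erase hl0
    have hl0' : l0 ∈ (s.erase j).erase i := Finset.mem_of_mem_erase hl0
    have hl0i : l0 ≠ i := Finset.ne_of_mem_erase hl0'
    have hl0j : l0 ≠ j := Finset.ne_of_mem_erase (Finset.mem_of_mem_erase hl0')
    have hl0s : l0 ∈ s := Finset.mem_of_mem_erase (Finset.mem_of_mem_erase hl0')
    have hFsub : ({i, j, k0, l0} : Finset ι) ⊆ s := by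
      intro x hx
      simp only [Finset.mem_insert, Finset.mem_singleton] at hx
      rcases hx with rfl | rfl | rfl | rfl <;> assumption
    have hFsum : ∑ x ∈ ({i, j, k0, l0} : Finset ι), a x = a i + a j + a k0 + a l0 := by
      rw [Finset.sum_insert (by simp [Ne.symm hji, Ne.symm hk0i, Ne.symm hl0i]),
        Finset.sum_insert (by simp [Ne.symm hk0j, Ne.symm hl0j]),
        Finset.sum_insert (by simp [Ne.symm hl0k]), Finset.sum_singleton]
      ring
    have hfour : a i + a j + a k0 + a l0 ≤ ∑ x ∈ s, a x := by
      rw [← hFsum]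
      exact Finset.sum_le_sum_of_subset_of_nonneg hFsub (fun x hx _ => hpos x hx)
    have haik : a i ≤ a k0 := hmin_i k0 hk0s
    have hajl : a j ≤ a l0 := hmin_j l0 (Finset.mem_erase.mpr ⟨hl0i, hl0s⟩)
    have hmerge : 2 * (a i + a j) ≤ ∑ x ∈ s, a x := by linarith
    have hmax' : ∀ k ∈ s', 2 * a' k ≤ ∑ j ∈ s', a' j := by
      intro k hk
      rw [hsum_eq]
      by_cases hki : k = i
      · subst hki; rw [hupd_i]; exact hmerge
      · rw [hupd_ne k hki]; exact hmax k (Finset.mem_of_mem_erase hk)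
    obtain ⟨u', hu'abs, hu'sum⟩ := IH s' a' hcard' hpos' hmax'
    refine ⟨Function.update u' j (u' i), ?_, ?_⟩
    · intro k hk
      by_cases hkj : k = j
      · subst hkj; rw [Function.update_self]; exact hu'abs i hi'
      · rw [Function.update_of_ne hkj]
        exact hu'abs k (Finset.mem_erase.mpr ⟨hkj, hk⟩)
    · have step1 : (a j : ℂ) * Function.update u' j (u' i) j
          + ∑ x ∈ s.erase j, (a x : ℂ) * Function.update u' j (u' i) x
          = ∑ x ∈ s, (a x : ℂ) * Function.update u' j (u' i) x :=
        Finset.add_sum_erase s (fun x => (a x : ℂ) * Function.update u' j (u' i) x) hjs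
      have step2 : ∑ x ∈ s.erase j, (a x : ℂ) * Function.update u' j (u' i) x
          = ∑ x ∈ s.erase j, (a x : ℂ) * u' x :=
        Finset.sum_congr rfl fun x hx => by
          rw [Function.update_of_ne (Finset.ne_of_mem_erase hx)]
      have step3 : (a' i : ℂ) * u' i + ∑ x ∈ s'.erase i, (a' x : ℂ) * u' x
          = ∑ x ∈ s', (a' x : ℂ) * u' x :=
        Finset.add_sum_erase s' (fun x => (a' x : ℂ) * u' x) hi'
      have step4 : ∑ x ∈ s'.erase i, (a' x : ℂ) * u' x
          = ∑ x ∈ s'.erase i, (a x : ℂ) * u' x :=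
        Finset.sum_congr rfl fun x hx => by rw [hupd_ne x (Finset.ne_of_mem_erase hx)]
      have step5 : (a i : ℂ) * u' i + ∑ x ∈ s'.erase i, (a x : ℂ) * u' x
          = ∑ x ∈ s', (a x : ℂ) * u' x :=
        Finset.add_sum_erase s' (fun x => (a x : ℂ) * u' x) hi'
      have key : ∑ x ∈ s.erase j, (a x : ℂ) * u' x = -(a j : ℂ) * u' i := by
        have h3 := step3
        rw [hu'sum, step4, hupd_i] at h3
        have h5 : ∑ x ∈ s.erase j, (a x : ℂ) * u' x
            = (a i : ℂ) * u' i + ∑ x ∈ s'.erase i, (a x : ℂ) * u' x := step5.symm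
        rw [h5]
        push_cast at h3 ⊢
        linear_combination h3
      rw [← step1, step2, key, Function.update_self]
      ring

theorem polygon_inequality {N : ℕ} (hN : 3 ≤ N) (h : Fin N → ℂ) :
    (∃ φ : Fin N → ℝ, ∑ i, h i * Complex.exp (φ i * Complex.I) = 0) ↔
    ∀ i, ‖h i‖ ≤ (1 / 2) * ∑ j, ‖h j‖ := by
  constructor
  · rintro ⟨φ, hφ⟩ i
    set e : Fin N → ℂ := fun k => Complex.exp (φ k * Complex.I) with he
    have habse : ∀ k, ‖e k‖ = 1 := fun k => by
      simp [he, Complex.norm_exp]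
    have hsplit : h i * e i + ∑ k ∈ Finset.univ.erase i, h k * e k
        = ∑ k, h k * e k :=
      Finset.add_sum_erase Finset.univ (fun k => h k * e k) (Finset.mem_univ i)
    have hkey : h i * e i = -∑ k ∈ Finset.univ.erase i, h k * e k := by
      rw [hφ] at hsplit
      linear_combination hsplit
    have habs1 : ‖h i‖ = ‖∑ k ∈ Finset.univ.erase i, h k * e k‖ := by
      rw [show ‖h i‖ = ‖h i * e i‖ by rw [norm_mul, habse i, mul_one],
        hkey, norm_neg]
    have habs2 : ‖∑ k ∈ Finset.univ.erase i, h k * e k‖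
        ≤ ∑ k ∈ Finset.univ.erase i, ‖h k‖ := by
      refine le_trans (norm_sum_le _ _) (le_of_eq ?_)
      exact Finset.sum_congr rfl fun k _ => by rw [norm_mul, habse k, mul_one]
    have hsplit2 : ‖h i‖ + ∑ k ∈ Finset.univ.erase i, ‖h k‖
        = ∑ k, ‖h k‖ :=
      Finset.add_sum_erase Finset.univ (fun k => ‖h k‖) (Finset.mem_univ i)
    have : ‖h i‖ ≤ ∑ k ∈ Finset.univ.erase i, ‖h k‖ :=
      habs1 ▸ habs2
    linarith
  · intro hmax
    obtain ⟨u, huabs, husum⟩ := polygon_exists N hN Finset.univ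
      (fun i => ‖h i‖) (by simp) (fun i _ => norm_nonneg _)
      (fun i _ => by have := hmax i; linarith)
    refine ⟨fun i => if hc : h i = 0 then 0 else
      Complex.arg ((‖h i‖ : ℂ) * u i / h i), ?_⟩
    have hterm : ∀ i : Fin N, h i * Complex.exp
        ((if hc : h i = 0 then (0:ℝ) else
          Complex.arg ((‖h i‖ : ℂ) * u i / h i)) * Complex.I)
        = (‖h i‖ : ℂ) * u i := by
      intro i
      by_cases hc : h i = 0
      · simp [hc]
      · rw [dif_neg hc]
        have hwabs : ‖(‖h i‖ : ℂ) * u i / h i‖ = 1 := by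
          rw [norm_div, norm_mul, Complex.norm_real, Real.norm_eq_abs,
            _root_.abs_of_nonneg (norm_nonneg _), huabs i (Finset.mem_univ i),
            mul_one, div_self]
          exact norm_ne_zero_iff.mpr hc
        rw [exp_arg_of_abs_one hwabs]
        field_simp
    calc ∑ i, h i * Complex.exp ((if hc : h i = 0 then (0:ℝ) else
          Complex.arg ((‖h i‖ : ℂ) * u i / h i)) * Complex.I)
        = ∑ i, (‖h i‖ : ℂ) * u i := Finset.sum_congr rfl fun i _ => hterm i
      _ = 0 := husum
end

section
/- Let h₁, h₂ ∈ ℂ^N, let B₁ ∈ {0,1}^{m×N} be a partition matrix, let φ₁ ∈ ℝ^N satisfy B₁·diag(e^{iφ₁})·h₁ = 0 ∈ ℂ^m, let y = B₁·diag(e^{iφ₁})·h₂ ∈ ℂ^m, and let φ₂ ∈ ℝ^m satisfy ∑_{l=1}^m y_l e^{i(φ₂)_l} = 0. Define w = diag(e^{iφ₁})·B₁ᵀ·(e^{i(φ₂)_1}, ..., e^{i(φ₂)_m})ᵀ ∈ ℂ^N. Then every entry of w has modulus 1, and h₁ᵀ·w = 0 and h₂ᵀ·w = 0. -/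
open Complex Finset Matrix

theorem spzf_correctness_K2 {N m : ℕ}
    (h₁ h₂ : Fin N → ℂ) (f : Fin N → Fin m)
    (B : Matrix (Fin m) (Fin N) ℂ)
    (hB : ∀ l i, B l i = if f i = l then 1 else 0)
    (φ₁ : Fin N → ℝ)
    (hzf₁ : B.mulVec
      ((Matrix.diagonal (fun i => Complex.exp (φ₁ i * Complex.I))).mulVec h₁) = 0)
    (y : Fin m → ℂ)
    (hy : y = B.mulVec
      ((Matrix.diagonal (fun i => Complex.exp (φ₁ i * Complex.I))).mulVec h₂))
    (φ₂ : Fin m → ℝ)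
    (hzf₂ : ∑ l : Fin m, y l * Complex.exp (φ₂ l * Complex.I) = 0)
    (w : Fin N → ℂ)
    (hw : w = (Matrix.diagonal (fun i => Complex.exp (φ₁ i * Complex.I))).mulVec
      (B.transpose.mulVec (fun l => Complex.exp (φ₂ l * Complex.I)))) :
    (∀ i, ‖w i‖ = 1) ∧
    (∑ i : Fin N, h₁ i * w i = 0) ∧ (∑ i : Fin N, h₂ i * w i = 0) := by
  have hwi : ∀ i, w i = Complex.exp (φ₁ i * Complex.I) *
      Complex.exp (φ₂ (f i) * Complex.I) := by
    intro i
    simp only [hw, Matrix.mulVec, dotProduct, Matrix.diagonal_apply,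
      Matrix.transpose_apply, hB, ite_mul, one_mul, zero_mul, boole_mul]
    rw [Finset.sum_eq_single i]
    · simp
    · intro b _ hb; simp [(Ne.symm hb : i ≠ b)]
    · simp
  have key : ∀ h : Fin N → ℂ, ∑ i : Fin N, h i * w i =
      ∑ l : Fin m, (B.mulVec
        ((Matrix.diagonal (fun i => Complex.exp (φ₁ i * Complex.I))).mulVec h)) l *
        Complex.exp (φ₂ l * Complex.I) := by
    intro h
    have hterm : ∀ i, h i * w i =
        ∑ l : Fin m, B l i * (Complex.exp (φ₁ i * Complex.I) * h i) *
          Complex.exp (φ₂ l * Complex.I) := by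
      intro i
      rw [Finset.sum_eq_single (f i)]
      · rw [hB]; simp [hwi]; ring
      · intro b _ hb; simp [hB, (Ne.symm hb : ¬ f i = b)]
      · simp
    calc ∑ i : Fin N, h i * w i
        = ∑ i : Fin N, ∑ l : Fin m, B l i * (Complex.exp (φ₁ i * Complex.I) * h i) *
            Complex.exp (φ₂ l * Complex.I) := Finset.sum_congr rfl fun i _ => hterm i
      _ = ∑ l : Fin m, ∑ i : Fin N, B l i * (Complex.exp (φ₁ i * Complex.I) * h i) *
            Complex.exp (φ₂ l * Complex.I) := Finset.sum_comm
      _ = _ := by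
          refine Finset.sum_congr rfl fun l _ => ?_
          rw [Matrix.mulVec, dotProduct, Finset.sum_mul]
          refine Finset.sum_congr rfl fun i _ => ?_
          simp [Matrix.mulVec, dotProduct, Matrix.diagonal_apply]
  refine ⟨fun i => by simp [hwi, ← Complex.exp_add, Complex.norm_exp], ?_, ?_⟩
  · rw [key h₁, hzf₁]; simp
  · rw [key h₂, ← hy]; exact hzf₂
end
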